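/- Fix n ≥ 1 and for each k ∈ {1,...,n} a function r_k : {0,1} × {0,1} → ℝ satisfying r_k(0,z) + r_k(1,z) = 1 for each z ∈ {0,1} and r_k(1,0) ≠ r_k(1,1). Let R(a, z) = Π_{k=1}^n r_k(a_k, z_k) for (a, z) ∈ {0,1}^n × {0,1}^n. If μ, μ' : {0,1}^n → ℝ satisfy Σ_{z ∈ {0,1}^n} R(a, z) μ(z) = Σ_{z ∈ {0,1}^n} R(a, z) μ'(z) for every a ∈ {0,1}^n, then μ = μ'. In particular, the distribution of the latent variables is uniquely determined by the distribution of their anchors. -/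

import Mathlib

open Finset

/-- The distribution of the latent variables is uniquely determined by the
distribution of their anchors: the map `μ ↦ Rμ` is injective. -/
theorem anchor_moment_map_injective (n : ℕ) (hn : 1 ≤ n) (r : Fin n → Bool → Bool → ℝ)
    (hsum : ∀ k z, r k false z + r k true z = 1)
    (hneq : ∀ k, r k true false ≠ r k true true)
    (μ μ' : (Fin n → Bool) → ℝ)
    (h : ∀ a : Fin n → Bool,
      ∑ z : Fin n → Bool, (∏ k : Fin n, r k (a k) (z k)) * μ z =
        ∑ z : Fin n → Bool, (∏ k : Fin n, r k (a k) (z k)) * μ' z) :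
    μ = μ' := by
  set d : Fin n → ℝ := fun k => r k true true - r k true false with hd
  have hd0 : ∀ k, d k ≠ 0 := fun k => sub_ne_zero.mpr (hneq k).symm
  set s : Fin n → Bool → Bool → ℝ := fun k z a =>
    (match z, a with
     | false, false => r k true true
     | false, true => -(r k false true)
     | true, false => -(r k true false)
     | true, true => r k false false) / d k with hs
  have hinv : ∀ k z z', (∑ a : Bool, s k z a * r k a z') = if z = z' then 1 else 0 := by
    intro k z z'
    have e1 : r k false false = 1 - r k true false := by linarith [hsum k false]
    have e2 : r k false true = 1 - r k true true := by linarith [hsum k true]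
    have hdk := hd0 k
    cases z <;> cases z' <;>
      · simp only [hs, Fintype.sum_bool, hd, e1, e2, Bool.false_eq_true, Bool.true_eq_false, ↓reduceIte] at *
        field_simp
        ring
  have key : ∀ ν : (Fin n → Bool) → ℝ, ∀ z0 : Fin n → Bool,
      (∑ a : Fin n → Bool, (∏ k, s k (z0 k) (a k)) *
        (∑ z : Fin n → Bool, (∏ k, r k (a k) (z k)) * ν z)) = ν z0 := by
    intro ν z0
    simp_rw [Finset.mul_sum]
    rw [Finset.sum_comm]
    have step : ∀ z : Fin n → Bool,
        (∑ a : Fin n → Bool, (∏ k, s k (z0 k) (a k)) * ((∏ k, r k (a k) (z k)) * ν z))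
          = (if z0 = z then 1 else 0) * ν z := by
      intro z
      have : (∑ a : Fin n → Bool, (∏ k, s k (z0 k) (a k)) * (∏ k, r k (a k) (z k)))
          = ∏ k, ∑ b : Bool, s k (z0 k) b * r k b (z k) := by
        rw [Finset.prod_univ_sum]
        rw [Fintype.piFinset_univ]
        exact Finset.sum_congr rfl fun a _ => (Finset.prod_mul_distrib).symm
      calc (∑ a : Fin n → Bool, (∏ k, s k (z0 k) (a k)) * ((∏ k, r k (a k) (z k)) * ν z))
          = (∑ a : Fin n → Bool, (∏ k, s k (z0 k) (a k)) * (∏ k, r k (a k) (z k))) * ν z := by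
            rw [Finset.sum_mul]; exact Finset.sum_congr rfl fun a _ => (mul_assoc _ _ _).symm
        _ = (∏ k, ∑ b : Bool, s k (z0 k) b * r k b (z k)) * ν z := by rw [this]
        _ = (∏ k, if z0 k = z k then (1:ℝ) else 0) * ν z := by
            congr 1; exact Finset.prod_congr rfl fun k _ => hinv k (z0 k) (z k)
        _ = (if z0 = z then 1 else 0) * ν z := by
            congr 1
            by_cases hz : z0 = z
            · simp [hz]
            · obtain ⟨k, hk⟩ : ∃ k, z0 k ≠ z k := by
                by_contra hc
                push_neg at hc
                exact hz (funext hc)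
              rw [if_neg hz]
              exact Finset.prod_eq_zero (Finset.mem_univ k) (if_neg hk)
    simp_rw [step]
    simp
  have := key μ
  have h2 := key μ'
  funext z0
  rw [← key μ z0, ← key μ' z0]
  exact Finset.sum_congr rfl fun a _ => by rw [h a]
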